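/- Let f(x) = q_n·log(1 + h_n(P−x)/(h_n·x + σ)) + q_m·log(1 + h_m·x/σ) with positive constants q_n, q_m, h_n, h_m, P, σ. If for all x ∈ [0,P] one has q_n·h_n²/(h_n·x + σ)² ≤ q_m·h_m²/(h_m·x + σ)², then f is concave on [0,P]. -/

import Mathlib

open Real

theorem stmt_1 (qn qm hn hm P σ : ℝ)
    (hqn : 0 < qn) (hqm : 0 < qm) (hhn : 0 < hn) (hhm : 0 < hm)
    (hP : 0 < P) (hσ : 0 < σ)
    (f : ℝ → ℝ)
    (hf : f = fun x => qn * Real.log (1 + hn * (P - x) / (hn * x + σ))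
        + qm * Real.log (1 + hm * x / σ))
    (hcond : ∀ x ∈ Set.Icc (0 : ℝ) P,
      qn * hn ^ 2 / (hn * x + σ) ^ 2 ≤ qm * hm ^ 2 / (hm * x + σ) ^ 2) :
    ConcaveOn ℝ (Set.Icc (0 : ℝ) P) f := by
  set g : ℝ → ℝ := fun x => qn * Real.log (hn * P + σ) - qn * Real.log (hn * x + σ)
      + qm * Real.log (hm * x + σ) - qm * Real.log σ with hg
  have hposn : ∀ x ∈ Set.Icc (0 : ℝ) P, 0 < hn * x + σ := fun x hx => by
    have : 0 ≤ hn * x := mul_nonneg hhn.le hx.1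
    linarith
  have hposm : ∀ x ∈ Set.Icc (0 : ℝ) P, 0 < hm * x + σ := fun x hx => by
    have : 0 ≤ hm * x := mul_nonneg hhm.le hx.1
    linarith
  have hint : interior (Set.Icc (0 : ℝ) P) = Set.Ioo 0 P := interior_Icc
  have hgc : ConcaveOn ℝ (Set.Icc (0 : ℝ) P) g := by
    apply concaveOn_of_hasDerivWithinAt2_nonpos (convex_Icc 0 P)
      (f' := fun x => -(qn * hn / (hn * x + σ)) + qm * hm / (hm * x + σ))
      (f'' := fun x => qn * hn ^ 2 / (hn * x + σ) ^ 2 - qm * hm ^ 2 / (hm * x + σ) ^ 2)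
    · apply ContinuousOn.sub
      apply ContinuousOn.add
      · apply ContinuousOn.sub continuousOn_const
        exact ContinuousOn.mul continuousOn_const
          (Real.continuousOn_log.comp (by fun_prop)
            (fun x hx => (hposn x hx).ne'))
      · exact ContinuousOn.mul continuousOn_const
          (Real.continuousOn_log.comp (by fun_prop)
            (fun x hx => (hposm x hx).ne'))
      · exact continuousOn_const
    · intro x hx
      rw [hint] at hx
      have hx' : x ∈ Set.Icc (0:ℝ) P := Set.Ioo_subset_Icc_self hx
      have h1 : HasDerivAt (fun x => hn * x + σ) hn x := by
        simpa using ((hasDerivAt_id x).const_mul hn).add_const σ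
      have h2 : HasDerivAt (fun x => hm * x + σ) hm x := by
        simpa using ((hasDerivAt_id x).const_mul hm).add_const σ
      have d1 : HasDerivAt (fun x => Real.log (hn * x + σ)) (hn / (hn * x + σ)) x :=
        h1.log (hposn x hx').ne'
      have d2 : HasDerivAt (fun x => Real.log (hm * x + σ)) (hm / (hm * x + σ)) x :=
        h2.log (hposm x hx').ne'
      have : HasDerivAt g (-(qn * (hn / (hn * x + σ))) + qm * (hm / (hm * x + σ))) x := by
        have := ((d1.const_mul qn).const_sub (qn * Real.log (hn * P + σ))).add
          (d2.const_mul qm)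
        simpa [hg, sub_eq_add_neg] using this.sub_const (qm * Real.log σ)
      refine HasDerivAt.hasDerivWithinAt ?_
      exact this.congr_deriv (by ring)
    · intro x hx
      rw [hint] at hx
      have hx' : x ∈ Set.Icc (0:ℝ) P := Set.Ioo_subset_Icc_self hx
      have h1 : HasDerivAt (fun x => hn * x + σ) hn x := by
        simpa using ((hasDerivAt_id x).const_mul hn).add_const σ
      have h2 : HasDerivAt (fun x => hm * x + σ) hm x := by
        simpa using ((hasDerivAt_id x).const_mul hm).add_const σ
      have d1 : HasDerivAt (fun x => qn * hn / (hn * x + σ))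
          (-(qn * hn * hn / (hn * x + σ) ^ 2)) x := by
        have := (hasDerivAt_const x (qn * hn)).div h1 (hposn x hx').ne'
        exact this.congr_deriv (by ring)
      have d2 : HasDerivAt (fun x => qm * hm / (hm * x + σ))
          (-(qm * hm * hm / (hm * x + σ) ^ 2)) x := by
        have := (hasDerivAt_const x (qm * hm)).div h2 (hposm x hx').ne'
        exact this.congr_deriv (by ring)
      refine HasDerivAt.hasDerivWithinAt ?_
      exact (d1.neg.add d2).congr_deriv (by ring)
    · intro x hx
      rw [hint] at hx
      have := hcond x (Set.Ioo_subset_Icc_self hx)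
      linarith
  refine hgc.congr fun x hx => ?_
  have hn0 := hposn x hx
  have hm0 := hposm x hx
  have hnP : 0 < hn * P + σ := by nlinarith
  have e1 : 1 + hn * (P - x) / (hn * x + σ) = (hn * P + σ) / (hn * x + σ) := by
    field_simp; ring
  have e2 : 1 + hm * x / σ = (hm * x + σ) / σ := by
    field_simp; ring
  rw [hf]
  simp only [hg, e1, e2, Real.log_div hnP.ne' hn0.ne', Real.log_div hm0.ne' hσ.ne']
  ring
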